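/- Let f(x,y) := x²/(2y) + (1/4)·y·log(y) on ℍ² := {(x,y) : y > 0}, with E := f_xx = 1/y, F := f_xy = −x/y², G := f_yy = (4x²+y²)/(4y³). Consider the coordinate change x = r²θ, y = r² for r > 0, θ ∈ ℝ. Then at every (r,θ) with r > 0, writing x_r = 2rθ, x_θ = r², y_r = 2r, y_θ = 0 and evaluating E, F, G at (r²θ, r²), the following hold: E·x_r² + 2F·x_r·y_r + G·y_r² = 1, E·x_r·x_θ + F·(x_r·y_θ + x_θ·y_r) + G·y_r·y_θ = 0, and E·x_θ² + 2F·x_θ·y_θ + G·y_θ² = r². That is, the coordinate change brings the Hessian quadratic form of f to the flat Euclidean metric dr² + r²dθ² in polar coordinates. -/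

import Mathlib

/-- Partial derivative in the `x`-direction. -/
noncomputable def px (f : ℝ × ℝ → ℝ) (p : ℝ × ℝ) : ℝ := fderiv ℝ f p (1, 0)

/-- Partial derivative in the `y`-direction. -/
noncomputable def py (f : ℝ × ℝ → ℝ) (p : ℝ × ℝ) : ℝ := fderiv ℝ f p (0, 1)

/-- The explicit Hessian potential `f(x,y) = x²/(2y) + (1/4) y log y` on the
upper half plane. -/
noncomputable def fExample (q : ℝ × ℝ) : ℝ :=
  q.1 ^ 2 / (2 * q.2) + (1 / 4) * q.2 * Real.log q.2

lemma hfd (q : ℝ × ℝ) (hq : 0 < q.2) :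
    HasFDerivAt fExample
      ((q.1 / q.2) • ContinuousLinearMap.fst ℝ ℝ ℝ
        + (-q.1 ^ 2 / (2 * q.2 ^ 2) + (Real.log q.2 + 1) / 4) • ContinuousLinearMap.snd ℝ ℝ ℝ) q := by
  have hy : q.2 ≠ 0 := hq.ne'
  have h2 : (2 : ℝ) * q.2 ≠ 0 := by positivity
  have H := (((hasFDerivAt_fst : HasFDerivAt _ (ContinuousLinearMap.fst ℝ ℝ ℝ) q).mul hasFDerivAt_fst).mul
      ((hasDerivAt_inv h2).comp_hasFDerivAt q ((hasFDerivAt_snd : HasFDerivAt _ (ContinuousLinearMap.snd ℝ ℝ ℝ) q).const_mul 2))).add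
    (((hasFDerivAt_snd : HasFDerivAt _ (ContinuousLinearMap.snd ℝ ℝ ℝ) q).const_mul (1/4 : ℝ)).mul
      ((Real.hasDerivAt_log hy).comp_hasFDerivAt q (hasFDerivAt_snd : HasFDerivAt _ (ContinuousLinearMap.snd ℝ ℝ ℝ) q)))
  have hf : fExample = fun p : ℝ × ℝ => p.1 * p.1 * (2 * p.2)⁻¹ + 1 / 4 * p.2 * Real.log p.2 := by
    funext p; simp [fExample, pow_two, div_eq_mul_inv]
  rw [hf]
  refine H.congr_fderiv ?_
  ext
  all_goals simp
  all_goals (try field_simp)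
  all_goals (try ring)

lemma px_f (q : ℝ × ℝ) (hq : 0 < q.2) : px fExample q = q.1 / q.2 := by
  rw [px, (hfd q hq).fderiv]; simp

lemma py_f (q : ℝ × ℝ) (hq : 0 < q.2) :
    py fExample q = -q.1 ^ 2 / (2 * q.2 ^ 2) + (Real.log q.2 + 1) / 4 := by
  rw [py, (hfd q hq).fderiv]; simp

lemma hg1 (q : ℝ × ℝ) (hq : 0 < q.2) :
    HasFDerivAt (fun p : ℝ × ℝ => p.1 / p.2)
      ((1 / q.2) • ContinuousLinearMap.fst ℝ ℝ ℝ
        + (-q.1 / q.2 ^ 2) • ContinuousLinearMap.snd ℝ ℝ ℝ) q := by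
  have hy : q.2 ≠ 0 := hq.ne'
  have H := (hasFDerivAt_fst : HasFDerivAt _ (ContinuousLinearMap.fst ℝ ℝ ℝ) q).mul
    ((hasDerivAt_inv hy).comp_hasFDerivAt q (hasFDerivAt_snd : HasFDerivAt _ (ContinuousLinearMap.snd ℝ ℝ ℝ) q))
  have hf : (fun p : ℝ × ℝ => p.1 / p.2) = fun p : ℝ × ℝ => p.1 * p.2⁻¹ := by
    funext p; rw [div_eq_mul_inv]
  rw [hf]
  refine H.congr_fderiv ?_
  ext
  all_goals simp
  all_goals (try field_simp)
  all_goals (try ring)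

lemma hg2 (q : ℝ × ℝ) (hq : 0 < q.2) :
    HasFDerivAt (fun p : ℝ × ℝ => -p.1 ^ 2 / (2 * p.2 ^ 2) + (Real.log p.2 + 1) / 4)
      ((-q.1 / q.2 ^ 2) • ContinuousLinearMap.fst ℝ ℝ ℝ
        + (q.1 ^ 2 / q.2 ^ 3 + 1 / (4 * q.2)) • ContinuousLinearMap.snd ℝ ℝ ℝ) q := by
  have hy : q.2 ≠ 0 := hq.ne'
  have h2 : (2 : ℝ) * (q.2 * q.2) ≠ 0 := by positivity
  have H := ((((hasFDerivAt_fst : HasFDerivAt _ (ContinuousLinearMap.fst ℝ ℝ ℝ) q).mul hasFDerivAt_fst).neg).mul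
      ((hasDerivAt_inv h2).comp_hasFDerivAt q
        (((hasFDerivAt_snd : HasFDerivAt _ (ContinuousLinearMap.snd ℝ ℝ ℝ) q).mul hasFDerivAt_snd).const_mul 2))).add
    ((((Real.hasDerivAt_log hy).comp_hasFDerivAt q (hasFDerivAt_snd : HasFDerivAt _ (ContinuousLinearMap.snd ℝ ℝ ℝ) q)).add_const 1).const_mul (1/4 : ℝ))
  have hf : (fun p : ℝ × ℝ => -p.1 ^ 2 / (2 * p.2 ^ 2) + (Real.log p.2 + 1) / 4)
      = fun p : ℝ × ℝ => -(p.1 * p.1) * (2 * (p.2 * p.2))⁻¹ + 1 / 4 * (Real.log p.2 + 1) := by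
    funext p; rw [pow_two, pow_two, div_eq_mul_inv, div_eq_mul_inv]; ring
  rw [hf]
  refine H.congr_fderiv ?_
  ext
  all_goals simp
  all_goals (try field_simp)
  all_goals (try ring)

lemma ev_px (q : ℝ × ℝ) (hq : 0 < q.2) :
    px fExample =ᶠ[nhds q] fun p : ℝ × ℝ => p.1 / p.2 := by
  have ho : IsOpen {p : ℝ × ℝ | 0 < p.2} := isOpen_lt continuous_const continuous_snd
  filter_upwards [ho.mem_nhds hq] with p hp
  exact px_f p hp

lemma ev_py (q : ℝ × ℝ) (hq : 0 < q.2) :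
    py fExample =ᶠ[nhds q] fun p : ℝ × ℝ => -p.1 ^ 2 / (2 * p.2 ^ 2) + (Real.log p.2 + 1) / 4 := by
  have ho : IsOpen {p : ℝ × ℝ | 0 < p.2} := isOpen_lt continuous_const continuous_snd
  filter_upwards [ho.mem_nhds hq] with p hp
  exact py_f p hp

lemma pxpx (q : ℝ × ℝ) (hq : 0 < q.2) : px (px fExample) q = 1 / q.2 := by
  rw [px, (ev_px q hq).fderiv_eq, (hg1 q hq).fderiv]; simp

lemma pypx (q : ℝ × ℝ) (hq : 0 < q.2) : py (px fExample) q = -q.1 / q.2 ^ 2 := by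
  rw [py, (ev_px q hq).fderiv_eq, (hg1 q hq).fderiv]; simp

lemma pypy (q : ℝ × ℝ) (hq : 0 < q.2) :
    py (py fExample) q = q.1 ^ 2 / q.2 ^ 3 + 1 / (4 * q.2) := by
  rw [py, (ev_py q hq).fderiv_eq, (hg2 q hq).fderiv]; simp

theorem pullback_to_polar_flat_metric :
    ∀ r θ : ℝ, 0 < r →
      (px (px fExample) (r ^ 2 * θ, r ^ 2) * (2 * r * θ) ^ 2
          + 2 * py (px fExample) (r ^ 2 * θ, r ^ 2) * (2 * r * θ) * (2 * r)
          + py (py fExample) (r ^ 2 * θ, r ^ 2) * (2 * r) ^ 2 = 1)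
      ∧ (px (px fExample) (r ^ 2 * θ, r ^ 2) * (2 * r * θ) * r ^ 2
          + py (px fExample) (r ^ 2 * θ, r ^ 2) * ((2 * r * θ) * 0 + r ^ 2 * (2 * r))
          + py (py fExample) (r ^ 2 * θ, r ^ 2) * (2 * r) * 0 = 0)
      ∧ (px (px fExample) (r ^ 2 * θ, r ^ 2) * (r ^ 2) ^ 2
          + 2 * py (px fExample) (r ^ 2 * θ, r ^ 2) * r ^ 2 * 0
          + py (py fExample) (r ^ 2 * θ, r ^ 2) * 0 ^ 2 = r ^ 2) := by
  intro r θ hr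
  have hy : (0:ℝ) < (r ^ 2 * θ, r ^ 2).2 := by positivity
  rw [pxpx _ hy, pypx _ hy, pypy _ hy]
  have hr0 : r ≠ 0 := hr.ne'
  refine ⟨?_, ?_, ?_⟩ <;> (simp only; field_simp; ring)
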